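/- Let (D, IC) be a database and let M be a two-valued model of IC. Define the three-valued valuation N by N(p) = H^D(p) ⊕ M(p) for every atom p (identifying the two-valued truth values with the elements t, f of THREE). Then N is a three-valued model of D ∪ IC (viewing each atom of D as a formula), and, setting Insert = N^⊤ \ D and Retract = N^⊤ ∩ D, the pair (Insert, Retract) is a repair of (D, IC). -/

import Mathlib

/-- Propositional formulas built from atoms using negation, conjunction and disjunction. -/
inductive Fmla (α : Type) : Type where
  | atom : α → Fmla α
  | neg  : Fmla α → Fmla α
  | conj : Fmla α → Fmla α → Fmla α
  | disj : Fmla α → Fmla α → Fmla α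

/-- Two-valued satisfaction; a two-valued valuation is identified with its set of
true atoms `M` (so `M^t = M`, and the minimal Herbrand model `H^D` is `D` itself). -/
def sat2 {α : Type} (M : Set α) : Fmla α → Prop
  | .atom p => p ∈ M
  | .neg φ => ¬ sat2 M φ
  | .conj φ ψ => sat2 M φ ∧ sat2 M ψ
  | .disj φ ψ => sat2 M φ ∨ sat2 M ψ

/-- `M` is a two-valued model of the set of formulas `T`. -/
def models2 {α : Type} (M : Set α) (T : Set (Fmla α)) : Prop := ∀ φ ∈ T, sat2 M φ

/-- `(D, IC)` is a database: `IC` is a finite, classically consistent set of formulas. -/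
def IsDatabase {α : Type} (_D : Set α) (IC : Set (Fmla α)) : Prop :=
  IC.Finite ∧ ∃ M : Set α, models2 M IC

/-- The database `(D, IC)` is consistent: every formula of `IC` follows from `D`,
i.e. is satisfied by the minimal Herbrand model of `D`. -/
def IsConsistentDB {α : Type} (D : Set α) (IC : Set (Fmla α)) : Prop := models2 D IC

/-- `(I, R)` is a repair of the database `(D, IC)`. -/
def IsRepair {α : Type} (D : Set α) (IC : Set (Fmla α)) (I R : Set α) : Prop :=
  I ∩ D = ∅ ∧ R ⊆ D ∧ IsConsistentDB ((D ∪ I) \ R) IC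

/-- The three-valued structure THREE = {t, f, ⊤}. -/
inductive Three : Type where
  | tt | ff | top
  deriving DecidableEq

namespace Three

/-- Position in the truth order `f ≤_t ⊤ ≤_t t`. -/
def rank : Three → ℕ
  | ff => 0 | top => 1 | tt => 2

/-- Conjunction: meet w.r.t. the truth order. -/
def and3 (a b : Three) : Three := if rank a ≤ rank b then a else b

/-- Disjunction: join w.r.t. the truth order. -/
def or3 (a b : Three) : Three := if rank a ≤ rank b then b else a

/-- Negation: swaps `t` and `f`, fixes `⊤`. -/
def neg3 : Three → Three | tt => ff | ff => tt | top => top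

/-- `x ⊕ y`: the least upper bound w.r.t. the knowledge order. -/
def oplus (a b : Three) : Three := if a = b then a else top

/-- The knowledge order `≤_k`: `f` and `t` incomparable, both below `⊤`. -/
def kle (a b : Three) : Prop := a = b ∨ b = top

/-- The designated truth values are `t` and `⊤`. -/
def designated (a : Three) : Prop := a ≠ ff

end Three

/-- Three-valued evaluation of formulas. -/
def eval3 {α : Type} (ν : α → Three) : Fmla α → Three
  | .atom p => ν p
  | .neg φ => Three.neg3 (eval3 ν φ)
  | .conj φ ψ => Three.and3 (eval3 ν φ) (eval3 ν ψ)
  | .disj φ ψ => Three.or3 (eval3 ν φ) (eval3 ν ψ)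

/-- `ν` is a three-valued model of the set of formulas `T`. -/
def models3 {α : Type} (ν : α → Three) (T : Set (Fmla α)) : Prop :=
  ∀ φ ∈ T, Three.designated (eval3 ν φ)

open Classical in
/-- The two-valued valuation with true-set `M`, viewed inside THREE. -/
noncomputable def toThree {α : Type} (M : Set α) (p : α) : Three :=
  if p ∈ M then Three.tt else Three.ff

/-- `ν^⊤`: the atoms assigned `⊤` by `ν`. -/
def topSet {α : Type} (ν : α → Three) : Set α := {p | ν p = Three.top}

/-- `ν ≥_k μ` pointwise. -/
def kge {α : Type} (ν μ : α → Three) : Prop := ∀ p, Three.kle (μ p) (ν p)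

/-- The valuation `H^D ⊕ M` (pointwise `⊕`). -/
noncomputable def herbOplus {α : Type} (D M : Set α) : α → Three :=
  fun p => Three.oplus (toThree D p) (toThree M p)

/-- `M^DB = { N | N ≥_k H^D ⊕ M for some two-valued model M of IC }`. -/
def MDB {α : Type} (D : Set α) (IC : Set (Fmla α)) : Set (α → Three) :=
  {N | ∃ M : Set α, models2 M IC ∧ kge N (herbOplus D M)}

/-- The atoms of `D`, viewed as formulas. -/
def atomsOf {α : Type} (D : Set α) : Set (Fmla α) := Fmla.atom '' D

/-- `(I, R)` is a `≤_i`-preferred repair of `(D, IC)`: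
`(I', R') ≤_i (I, R)` iff `I ⊆ I'` and `R ⊆ R'`. -/
def IsPreferredRepairI {α : Type} (D : Set α) (IC : Set (Fmla α)) (I R : Set α) : Prop :=
  IsRepair D IC I R ∧
    ∀ I' R', IsRepair D IC I' R' → (I' ⊆ I ∧ R' ⊆ R) → (I ⊆ I' ∧ R ⊆ R')

/-- `(I, R)` is a `≤_c`-preferred repair of `(D, IC)`:
`(I', R') ≤_c (I, R)` iff `|I| + |R| ≤ |I'| + |R'|`. -/
def IsPreferredRepairC {α : Type} (D : Set α) (IC : Set (Fmla α)) (I R : Set α) : Prop :=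
  IsRepair D IC I R ∧
    ∀ I' R', IsRepair D IC I' R' → I'.ncard + R'.ncard ≤ I.ncard + R.ncard →
      I.ncard + R.ncard ≤ I'.ncard + R'.ncard

/-- `N` is `≤_i`-maximally consistent in `S`: no `N' ∈ S` has `N'^⊤ ⊊ N^⊤`. -/
def MaxConsI {α : Type} (S : Set (α → Three)) (N : α → Three) : Prop :=
  N ∈ S ∧ ¬ ∃ N' ∈ S, topSet N' ⊂ topSet N

/-- `N` is `≤_c`-maximally consistent in `S`: no `N' ∈ S` has `#(N'^⊤) < #(N^⊤)`. -/
def MaxConsC {α : Type} (S : Set (α → Three)) (N : α → Three) : Prop :=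
  N ∈ S ∧ ¬ ∃ N' ∈ S, (topSet N').ncard < (topSet N).ncard

instance (a b : Three) : Decidable (Three.kle a b) := by
  unfold Three.kle; infer_instance

instance : Fintype Three :=
  ⟨{Three.tt, Three.ff, Three.top}, by intro x; cases x <;> simp⟩

lemma kle_and3 : ∀ a a' b b' : Three, Three.kle a a' → Three.kle b b' →
    Three.kle (Three.and3 a b) (Three.and3 a' b') := by decide

lemma kle_or3 : ∀ a a' b b' : Three, Three.kle a a' → Three.kle b b' →
    Three.kle (Three.or3 a b) (Three.or3 a' b') := by decide

lemma kle_neg3 : ∀ a a' : Three, Three.kle a a' → Three.kle (Three.neg3 a) (Three.neg3 a') := by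
  decide

lemma eval3_kmono {α : Type} {μ ν : α → Three} (h : kge ν μ) (φ : Fmla α) :
    Three.kle (eval3 μ φ) (eval3 ν φ) := by
  induction φ with
  | atom p => exact h p
  | neg φ ih => exact kle_neg3 _ _ ih
  | conj φ ψ ih1 ih2 => exact kle_and3 _ _ _ _ ih1 ih2
  | disj φ ψ ih1 ih2 => exact kle_or3 _ _ _ _ ih1 ih2

open Classical in
lemma eval3_toThree {α : Type} (M : Set α) (φ : Fmla α) :
    eval3 (toThree M) φ = if sat2 M φ then Three.tt else Three.ff := by
  induction φ with
  | atom p => by_cases hp : p ∈ M <;> simp [eval3, toThree, sat2, hp]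
  | neg φ ih =>
    simp only [eval3, ih, sat2]
    by_cases h : sat2 M φ <;> simp [h, Three.neg3]
  | conj φ ψ ih1 ih2 =>
    simp only [eval3, ih1, ih2, sat2]
    by_cases h1 : sat2 M φ <;> by_cases h2 : sat2 M ψ <;>
      simp [h1, h2, Three.and3, Three.rank]
  | disj φ ψ ih1 ih2 =>
    simp only [eval3, ih1, ih2, sat2]
    by_cases h1 : sat2 M φ <;> by_cases h2 : sat2 M ψ <;>
      simp [h1, h2, Three.or3, Three.rank]

lemma kge_herbOplus {α : Type} (D M : Set α) : kge (herbOplus D M) (toThree M) := by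
  intro p
  unfold herbOplus Three.oplus toThree
  by_cases hD : p ∈ D <;> by_cases hM : p ∈ M <;> simp [hD, hM, Three.kle]

/-- Proposition 3: for a two-valued model `M` of `IC`, the
three-valued valuation `N = H^D ⊕ M` is a three-valued model of `D ∪ IC`, and
`(N^⊤ \ D, N^⊤ ∩ D)` is a repair of `(D, IC)`. -/
theorem three_valued_model_gives_repair {α : Type} (D : Set α) (IC : Set (Fmla α))
    (hDB : IsDatabase D IC) (M : Set α) (hM : models2 M IC) :
    models3 (herbOplus D M) (atomsOf D ∪ IC) ∧
      IsRepair D IC (topSet (herbOplus D M) \ D) (topSet (herbOplus D M) ∩ D) := by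
  classical
  set N := herbOplus D M with hN
  have hNp : ∀ p, N p = Three.oplus (toThree D p) (toThree M p) := fun _ => rfl
  have htop : topSet N = {p | (p ∈ D) ≠ (p ∈ M)} := by
    ext p
    simp only [topSet, Set.mem_setOf_eq, hNp, Three.oplus, toThree]
    by_cases hD : p ∈ D <;> by_cases hM : p ∈ M <;> simp [hD, hM]
  constructor
  · intro φ hφ
    rcases hφ with hφ | hφ
    · rcases hφ with ⟨p, hp, rfl⟩
      simp only [eval3, Three.designated, hNp, Three.oplus, toThree]
      by_cases hM : p ∈ M <;> simp [hp, hM]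
    · have h1 := eval3_kmono (kge_herbOplus D M) φ
      have h2 : eval3 (toThree M) φ = Three.tt := by
        rw [eval3_toThree]; simp [hM φ hφ]
      rw [h2] at h1
      rcases h1 with h | h
      · rw [hN, ← h]; intro hc; cases hc
      · rw [hN, h]; intro hc; cases hc
  · refine ⟨by ext p; simp, Set.inter_subset_right, ?_⟩
    have heq : (D ∪ (topSet N \ D)) \ (topSet N ∩ D) = M := by
      ext p
      simp only [Set.mem_diff, Set.mem_union, Set.mem_inter_iff, htop, Set.mem_setOf_eq]
      by_cases hD : p ∈ D <;> by_cases hM : p ∈ M <;> simp [hD, hM]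
    rw [heq]
    exact hM
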